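/- If μ ∈ ba_+ is a bounded finitely additive non-negative measure that is not countably additive, then V_ℰ(μ) := sup_{X ∈ L^∞} (E[U(X + ℰ)] - ∫ X dμ) = +∞. The key step: failure of countable additivity of μ ∈ ba_+ (with μ ≪ P) yields a decreasing sequence of events A_n with P(A_n) → 0 but inf_n μ(A_n) > 0. -/

import Mathlib

open Set Filter MeasureTheory

/-- If `μ ∈ ba_+` (a non-negative finitely additive measure, identified with a
positive continuous linear functional `φ` on `L^∞`, `μ ≪ P`) is not countably additive, then
`V_ℰ(μ) = sup_{X ∈ L^∞} (E[U(X + ℰ)] - ∫ X dμ) = +∞`.  The key step: failure of countable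
additivity yields a decreasing sequence of events `A n` with `P (A n) → 0` but
`inf_n μ (A n) > 0`. -/
theorem conjugate_eq_top_of_not_countably_additive
    {Ω : Type*} {m : MeasurableSpace Ω} (P : Measure Ω) [IsProbabilityMeasure P]
    (U : ℝ → ℝ) (hU : StrictMono U)
    (ℰ : Ω → ℝ) (x' : ℝ) (hℰ : ∀ ω, x' ≤ ℰ ω)
    (φ : Lp ℝ ⊤ P →L[ℝ] ℝ)
    (hpos : ∀ X : Lp ℝ ⊤ P, 0 ≤ᵐ[P] (X : Ω → ℝ) → 0 ≤ φ X)
    (hint : ∀ X : Lp ℝ ⊤ P, Integrable (fun ω => U (X ω + ℰ ω)) P)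
    (hna : ¬ ∀ (A : ℕ → Set Ω) (hA : ∀ n, MeasurableSet (A n)), Antitone A →
        (⋂ n, A n) = ∅ →
        Tendsto (fun n =>
            φ (indicatorConstLp ⊤ (hA n) (measure_ne_top P (A n)) (1 : ℝ))) atTop (nhds 0)) :
    (∃ (A : ℕ → Set Ω) (hA : ∀ n, MeasurableSet (A n)), Antitone A ∧
        Tendsto (fun n => (P (A n)).toReal) atTop (nhds 0) ∧
        0 < ⨅ n, φ (indicatorConstLp ⊤ (hA n) (measure_ne_top P (A n)) (1 : ℝ))) ∧
      (⨆ X : Lp ℝ ⊤ P, ((∫ ω, U (X ω + ℰ ω) ∂P - φ X : ℝ) : EReal)) = ⊤ := by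
  push_neg at hna
  obtain ⟨A, hA, hAnti, hInter, hnotend⟩ := hna
  set ψ : ℕ → ℝ := fun n => φ (indicatorConstLp ⊤ (hA n) (measure_ne_top P (A n)) (1 : ℝ))
    with hψ
  -- P (A n) → 0
  have hPto0 : Tendsto (fun n => (P (A n)).toReal) atTop (nhds 0) := by
    have h1 : Tendsto (fun n => P (A n)) atTop (nhds 0) := by
      have := tendsto_measure_iInter_atTop (μ := P)
        (fun n => (hA n).nullMeasurableSet) hAnti ⟨0, measure_ne_top P _⟩
      rwa [hInter, measure_empty] at this
    exact (ENNReal.tendsto_toReal (by simp)).comp h1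
  -- ψ nonneg
  have hψ0 : ∀ n, 0 ≤ ψ n := by
    intro n
    refine hpos _ ?_
    filter_upwards [indicatorConstLp_coeFn (p := ⊤) (μ := P)
      (hs := hA n) (hμs := measure_ne_top P (A n)) (c := (1:ℝ))] with ω hω
    rw [hω]
    exact indicator_nonneg (fun _ _ => zero_le_one) ω
  -- ψ antitone
  have hψanti : Antitone ψ := by
    intro a b hab
    have h : (0:ℝ) ≤ φ (indicatorConstLp ⊤ (hA a) (measure_ne_top P (A a)) (1 : ℝ)
        - indicatorConstLp ⊤ (hA b) (measure_ne_top P (A b)) (1 : ℝ)) := by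
      refine hpos _ ?_
      filter_upwards [Lp.coeFn_sub (indicatorConstLp ⊤ (hA a) (measure_ne_top P (A a)) (1 : ℝ))
          (indicatorConstLp ⊤ (hA b) (measure_ne_top P (A b)) (1 : ℝ)),
        indicatorConstLp_coeFn (p := ⊤) (μ := P)
          (hs := hA a) (hμs := measure_ne_top P (A a)) (c := (1:ℝ)),
        indicatorConstLp_coeFn (p := ⊤) (μ := P)
          (hs := hA b) (hμs := measure_ne_top P (A b)) (c := (1:ℝ))] with ω h1 h2 h3
      simp only [Pi.sub_apply, Pi.zero_apply] at *
      rw [h1, h2, h3]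
      by_cases hb : ω ∈ A b
      · have ha : ω ∈ A a := hAnti hab hb
        simp [indicator_of_mem, ha, hb]
      · simp only [indicator]
        split <;> simp
    have := map_sub φ (indicatorConstLp ⊤ (hA a) (measure_ne_top P (A a)) (1 : ℝ))
      (indicatorConstLp ⊤ (hA b) (measure_ne_top P (A b)) (1 : ℝ))
    rw [this] at h
    simp only [hψ]
    linarith
  have hbdd : BddBelow (range ψ) := ⟨0, by rintro x ⟨n, rfl⟩; exact hψ0 n⟩
  have hδ0 : 0 ≤ ⨅ n, ψ n := le_ciInf hψ0
  have hδ : 0 < ⨅ n, ψ n := by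
    rcases hδ0.lt_or_eq with h | h
    · exact h
    · exact absurd (h ▸ tendsto_atTop_ciInf hψanti hbdd) hnotend
  refine ⟨⟨A, hA, hAnti, hPto0, hδ⟩, ?_⟩
  set δ := ⨅ n, ψ n with hδdef
  -- integrability of U ∘ ℰ
  have hg : Integrable (fun ω => U (ℰ ω)) P := by
    refine (hint 0).congr ?_
    filter_upwards [Lp.coeFn_zero (E := ℝ) (p := ⊤) (μ := P)] with ω hω
    rw [hω]; simp
  -- set integrals of |U ∘ ℰ| over A n tend to 0
  have habs : Tendsto (fun n => ∫ ω in A n, |U (ℰ ω)| ∂P) atTop (nhds 0) := by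
    have := Antitone.tendsto_setIntegral (μ := P) hA hAnti
      (f := fun ω => |U (ℰ ω)|) (hg.abs.integrableOn)
    rwa [hInter, Measure.restrict_empty, integral_zero_measure] at this
  rw [iSup_eq_top]
  intro b hb
  obtain ⟨r, hbr, -⟩ := EReal.lt_iff_exists_real_btwn.mp hb
  -- choose k
  obtain ⟨k, hk⟩ := exists_nat_gt ((r - ∫ ω, U (ℰ ω) ∂P + 2) / δ)
  have hkδ : r - ∫ ω, U (ℰ ω) ∂P + 2 < k * δ := by
    rw [div_lt_iff₀ hδ] at hk; linarith
  -- choose n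
  have h1 : ∀ᶠ n in atTop, (P (A n)).toReal < 1 / (|U (x' - k)| + 1) :=
    hPto0.eventually (gt_mem_nhds (by positivity))
  have h2 : ∀ᶠ n in atTop, ∫ ω in A n, |U (ℰ ω)| ∂P < 1 :=
    habs.eventually (gt_mem_nhds one_pos)
  obtain ⟨n, hn1, hn2⟩ := (h1.and h2).exists
  set X : Lp ℝ ⊤ P := (-(k:ℝ)) • indicatorConstLp ⊤ (hA n) (measure_ne_top P (A n)) (1 : ℝ)
    with hX
  refine ⟨X, ?_⟩
  rw [show b < ((∫ ω, U (X ω + ℰ ω) ∂P - φ X : ℝ) : EReal) ↔ _ from Iff.rfl]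
  refine hbr.trans_le (EReal.coe_le_coe_iff.mpr ?_)
  -- φ X
  have hφX : φ X = -(k:ℝ) * ψ n := by
    rw [hX, φ.map_smul]; simp [hψ]
  -- coercion of X
  have hcoe : (X : Ω → ℝ) =ᵐ[P] (A n).indicator (fun _ => (-(k:ℝ))) := by
    filter_upwards [Lp.coeFn_smul (-(k:ℝ))
        (indicatorConstLp ⊤ (hA n) (measure_ne_top P (A n)) (1 : ℝ)),
      indicatorConstLp_coeFn (p := ⊤) (μ := P)
        (hs := hA n) (hμs := measure_ne_top P (A n)) (c := (1:ℝ))] with ω hω1 hω2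
    rw [hω1]
    simp only [Pi.smul_apply, hω2, smul_eq_mul]
    by_cases hmem : ω ∈ A n <;> simp [hmem]
  -- lower bound function
  set L : Ω → ℝ := fun ω => U (ℰ ω) + (A n).indicator (fun ω => U (x' - k) - U (ℰ ω)) ω
    with hL
  have hind : Integrable ((A n).indicator (fun ω => U (x' - (k:ℝ)) - U (ℰ ω))) P :=
    ((integrable_const _).sub hg).indicator (hA n)
  have hLint : Integrable L P := hg.add hind
  have hmono : L ≤ᵐ[P] fun ω => U (X ω + ℰ ω) := by
    filter_upwards [hcoe] with ω hω
    rw [hω, hL]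
    by_cases hmem : ω ∈ A n
    · simp only [Set.indicator_of_mem hmem]
      have : U (x' - k) ≤ U (-(k:ℝ) + ℰ ω) := hU.monotone (by linarith [hℰ ω])
      linarith
    · simp [Set.indicator_of_notMem hmem]
  have hintX : ∫ ω, L ω ∂P ≤ ∫ ω, U (X ω + ℰ ω) ∂P :=
    integral_mono_ae hLint (hint X) hmono
  have hLval : ∫ ω, L ω ∂P
      = (∫ ω, U (ℰ ω) ∂P) + (U (x' - k) * (P (A n)).toReal - ∫ ω in A n, U (ℰ ω) ∂P) := by
    rw [hL, integral_add hg hind,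
      integral_indicator (hA n), integral_sub ((integrableOn_const_iff (C := U (x' - (k:ℝ)))).mpr
        (Or.inr (measure_lt_top P (A n)))) hg.integrableOn, setIntegral_const, smul_eq_mul, mul_comm, measureReal_def]
  have hb1 : -1 ≤ U (x' - k) * (P (A n)).toReal := by
    have h0 : (0:ℝ) ≤ (P (A n)).toReal := ENNReal.toReal_nonneg
    have habs1 : |U (x' - k)| * (P (A n)).toReal ≤ 1 := by
      have h : (0:ℝ) < |U (x' - (k:ℝ))| + 1 := by positivity
      have := (lt_div_iff₀ h).mp hn1
      nlinarith [abs_nonneg (U (x' - (k:ℝ)))]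
    nlinarith [neg_abs_le (U (x' - k))]
  have hb2 : ∫ ω in A n, U (ℰ ω) ∂P ≤ 1 := by
    refine le_trans (integral_mono_ae hg.integrableOn hg.abs.integrableOn
      (Eventually.of_forall fun ω => le_abs_self _)) hn2.le
  have hψn : δ ≤ ψ n := ciInf_le hbdd n
  have hkψ : (k:ℝ) * δ ≤ (k:ℝ) * ψ n := by
    apply mul_le_mul_of_nonneg_left hψn (Nat.cast_nonneg k)
  rw [hφX]
  linarith
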